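/- For real numbers λ₁, λ₂, λ₃ with |λᵢ| < 1, λ₂ ≠ λ₃, and a nonnegative integer S, the sum ∑_{j₁≤0} ∑_{j₂≥0} λ₁^{-j₁} λ₂^{j₂} λ₃^{|S-j₁-j₂|} (over integers j₁ ≤ 0 and j₂ ≥ 0) equals λ₂^{S+1}(1-λ₃²)/((λ₂-λ₃)(1-λ₂λ₁)(1-λ₂λ₃)) + λ₃^{S+1}/((λ₃-λ₂)(1-λ₃λ₁)). -/

import Mathlib

open Finset

private lemma stmt9_summable (x y : ℝ) (hx : |x| < 1) (hy : |y| < 1) (M : ℤ) :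
    Summable (fun j : ℕ => x ^ j * y ^ (M - j).natAbs) := by
  apply Summable.of_norm_bounded (summable_geometric_of_lt_one (abs_nonneg x) hx)
  intro j
  rw [Real.norm_eq_abs, abs_mul, abs_pow, abs_pow]
  have : |y| ^ (M - j).natAbs ≤ 1 := pow_le_one₀ (abs_nonneg y) hy.le
  nlinarith [pow_nonneg (abs_nonneg x) j, pow_nonneg (abs_nonneg y) (M - j).natAbs]

private lemma stmt9_inner (x y : ℝ) (hx : |x| < 1) (hy : |y| < 1) (hxy : x ≠ y) (M : ℕ) :
    ∑' j : ℕ, x ^ j * y ^ ((M : ℤ) - j).natAbs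
      = (y ^ (M + 1) - x ^ (M + 1)) / (y - x) + x ^ (M + 1) * y / (1 - x * y) := by
  have hs := stmt9_summable x y hx hy (M : ℤ)
  have hxy' : y - x ≠ 0 := sub_ne_zero.mpr (Ne.symm hxy)
  have hxyabs : |x * y| < 1 := by
    rw [abs_mul]; nlinarith [abs_nonneg x, abs_nonneg y]
  have hxy1 : (1 : ℝ) - x * y ≠ 0 := by
    have := abs_lt.mp hxyabs; nlinarith [this.2]
  rw [← Summable.sum_add_tsum_nat_add (M + 1) hs]
  have hfin : ∑ j ∈ range (M + 1), x ^ j * y ^ ((M : ℤ) - j).natAbs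
      = (y ^ (M + 1) - x ^ (M + 1)) / (y - x) := by
    have h1 : ∑ j ∈ range (M + 1), x ^ j * y ^ ((M : ℤ) - j).natAbs
        = ∑ j ∈ range (M + 1), x ^ j * y ^ (M + 1 - 1 - j) := by
      apply Finset.sum_congr rfl
      intro j hj
      have hj' : j ≤ M := Nat.lt_succ_iff.mp (Finset.mem_range.mp hj)
      have h3 : ((M : ℤ) - j).natAbs = M + 1 - 1 - j := by omega
      rw [h3]
    rw [h1, eq_div_iff hxy']
    have := geom_sum₂_mul x y (M + 1)
    nlinarith [this]
  have htail : ∑' k : ℕ, x ^ (k + (M + 1)) * y ^ ((M : ℤ) - ↑(k + (M + 1))).natAbs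
      = x ^ (M + 1) * y / (1 - x * y) := by
    have h2 : ∀ k : ℕ, x ^ (k + (M + 1)) * y ^ ((M : ℤ) - ↑(k + (M + 1))).natAbs
        = x ^ (M + 1) * y * (x * y) ^ k := by
      intro k
      have h3 : ((M : ℤ) - ↑(k + (M + 1))).natAbs = k + 1 := by omega
      rw [h3]
      ring
    rw [tsum_congr h2, tsum_mul_left, tsum_geometric_of_abs_lt_one hxyabs,
      div_eq_mul_inv]
  rw [hfin, htail]

theorem stmt_9 (l1 l2 l3 : ℝ) (h1 : |l1| < 1) (h2 : |l2| < 1) (h3 : |l3| < 1)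
    (h23 : l2 ≠ l3) (S : ℕ) :
    ∑' p : ℕ × ℕ, l1 ^ p.1 * l2 ^ p.2 * l3 ^ ((S : ℤ) + p.1 - p.2).natAbs =
      l2 ^ (S + 1) * (1 - l3 ^ 2) / ((l2 - l3) * (1 - l2 * l1) * (1 - l2 * l3)) +
      l3 ^ (S + 1) / ((l3 - l2) * (1 - l3 * l1)) := by
  have habs : ∀ a b : ℝ, |a| < 1 → |b| < 1 → |a * b| < 1 := by
    intro a b ha hb
    rw [abs_mul]; nlinarith [abs_nonneg a, abs_nonneg b]
  have h12 := habs l1 l2 h1 h2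
  have h13 := habs l1 l3 h1 h3
  have hl23 := habs l2 l3 h2 h3
  have n12 : (1 : ℝ) - l1 * l2 ≠ 0 := by
    have := (abs_lt.mp h12).2
    have : (0:ℝ) < 1 - l1 * l2 := by linarith
    exact this.ne'
  have n13 : (1 : ℝ) - l1 * l3 ≠ 0 := by
    have := (abs_lt.mp h13).2
    have : (0:ℝ) < 1 - l1 * l3 := by linarith
    exact this.ne'
  have n23 : (1 : ℝ) - l2 * l3 ≠ 0 := by
    have := (abs_lt.mp hl23).2
    have : (0:ℝ) < 1 - l2 * l3 := by linarith
    exact this.ne'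
  have n21 : (1 : ℝ) - l2 * l1 ≠ 0 := by rwa [mul_comm]
  have n31 : (1 : ℝ) - l3 * l1 ≠ 0 := by rwa [mul_comm]
  have n32 : (1 : ℝ) - l3 * l2 ≠ 0 := by rwa [mul_comm]
  have d23 : l3 - l2 ≠ 0 := sub_ne_zero.mpr (Ne.symm h23)
  have d32 : l2 - l3 ≠ 0 := sub_ne_zero.mpr h23
  have hsumf : Summable (fun p : ℕ × ℕ =>
      l1 ^ p.1 * l2 ^ p.2 * l3 ^ ((S : ℤ) + p.1 - p.2).natAbs) := by
    apply Summable.of_norm_bounded (g := fun p : ℕ × ℕ => |l1| ^ p.1 * |l2| ^ p.2)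
    · exact Summable.mul_of_nonneg
        (summable_geometric_of_lt_one (abs_nonneg l1) h1)
        (summable_geometric_of_lt_one (abs_nonneg l2) h2)
        (fun i => pow_nonneg (abs_nonneg l1) i)
        (fun i => pow_nonneg (abs_nonneg l2) i)
    · intro p
      rw [Real.norm_eq_abs, abs_mul, abs_mul, abs_pow, abs_pow, abs_pow]
      have ht : |l3| ^ ((S : ℤ) + p.1 - p.2).natAbs ≤ 1 :=
        pow_le_one₀ (abs_nonneg l3) h3.le
      have he : (0:ℝ) ≤ |l1| ^ p.1 * |l2| ^ p.2 :=
        mul_nonneg (pow_nonneg (abs_nonneg l1) p.1) (pow_nonneg (abs_nonneg l2) p.2)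
      calc |l1| ^ p.1 * |l2| ^ p.2 * |l3| ^ ((S : ℤ) + p.1 - p.2).natAbs
          ≤ |l1| ^ p.1 * |l2| ^ p.2 * 1 := mul_le_mul_of_nonneg_left ht he
        _ = |l1| ^ p.1 * |l2| ^ p.2 := mul_one _
  have key : ∀ b : ℕ, (fun c : ℕ => l1 ^ b * l2 ^ c * l3 ^ ((S : ℤ) + b - c).natAbs)
      = fun c : ℕ => l1 ^ b * (l2 ^ c * l3 ^ (((S + b : ℕ) : ℤ) - c).natAbs) := by
    intro b; funext c
    have hc : ((S : ℤ) + b - c) = (((S + b : ℕ) : ℤ) - c) := by push_cast; ring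
    rw [hc, mul_assoc]
  have hinner : ∀ b : ℕ, Summable (fun c : ℕ =>
      l1 ^ b * l2 ^ c * l3 ^ ((S : ℤ) + b - c).natAbs) := by
    intro b
    rw [key b]
    exact (stmt9_summable l2 l3 h2 h3 ((S + b : ℕ) : ℤ)).mul_left _
  rw [Summable.tsum_prod' hsumf hinner]
  have hval : ∀ b : ℕ, ∑' c : ℕ, l1 ^ b * l2 ^ c * l3 ^ ((S : ℤ) + b - c).natAbs
      = (l3 ^ (S + 1) / (l3 - l2)) * (l1 * l3) ^ b
        + (l2 ^ (S + 1) * (l3 / (1 - l2 * l3) - 1 / (l3 - l2))) * (l1 * l2) ^ b := by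
    intro b
    rw [key b, tsum_mul_left, stmt9_inner l2 l3 h2 h3 h23 (S + b)]
    have e3 : l3 ^ (S + b + 1) = l3 ^ (S + 1) * l3 ^ b := by ring
    have e2 : l2 ^ (S + b + 1) = l2 ^ (S + 1) * l2 ^ b := by ring
    rw [e3, e2]
    field_simp
    ring
  rw [tsum_congr hval, Summable.tsum_add
      (((summable_geometric_of_abs_lt_one h13).mul_left _))
      (((summable_geometric_of_abs_lt_one h12).mul_left _)),
    tsum_mul_left, tsum_mul_left,
    tsum_geometric_of_abs_lt_one h13, tsum_geometric_of_abs_lt_one h12]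
  field_simp
  ring
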